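/- Let D be an open disk in ℂ, A an arc, ζ₀ ∈ A ∩ D, and let l be the line segment from a point ζ₁ ∈ D \ A to ζ₀. If l ∩ A ≠ {ζ₀}, then there is a point p ∈ l ∩ A closest to ζ₁, and p lies on the boundary of the connected component of ζ₁ in D \ A. -/
import Mathlib


/-- `A` is an arc from `p` to `q`. -/
def ArcFrom (p q : ℂ) (A : Set ℂ) : Prop :=
  ∃ f : ℝ → ℂ, ContinuousOn f (Set.Icc 0 1) ∧ Set.InjOn f (Set.Icc 0 1) ∧
    f '' Set.Icc 0 1 = A ∧ f 0 = p ∧ f 1 = q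

/-- `A` is an arc. -/
def IsArc (A : Set ℂ) : Prop := ∃ p q : ℂ, ArcFrom p q A

theorem closest_point_on_segment_in_boundary (c : ℂ) (r : ℝ) (hr : 0 < r)
    (A : Set ℂ) (hA : IsArc A) (ζ₀ ζ₁ : ℂ)
    (hζ₀ : ζ₀ ∈ A ∩ Metric.ball c r) (hζ₁ : ζ₁ ∈ Metric.ball c r \ A)
    (hne : segment ℝ ζ₁ ζ₀ ∩ A ≠ {ζ₀}) :
    ∃ p ∈ segment ℝ ζ₁ ζ₀ ∩ A,
      (∀ x ∈ segment ℝ ζ₁ ζ₀ ∩ A, dist ζ₁ p ≤ dist ζ₁ x) ∧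
      p ∈ frontier (connectedComponentIn (Metric.ball c r \ A) ζ₁) := by
  classical
  obtain ⟨a, b, g, hgc, -, him, -, -⟩ := hA
  have hAcomp : IsCompact A := him ▸ isCompact_Icc.image_of_continuousOn hgc
  have hAclosed : IsClosed A := hAcomp.isClosed
  set S := segment ℝ ζ₁ ζ₀ ∩ A with hSdef
  have hseg : IsCompact (segment ℝ ζ₁ ζ₀) := by
    rw [segment_eq_image_lineMap]
    exact isCompact_Icc.image
      (AffineMap.lineMap ζ₁ ζ₀ : ℝ →ᵃ[ℝ] ℂ).continuous_of_finiteDimensional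
  have hScomp : IsCompact S := hseg.inter_right hAclosed
  have hSne : S.Nonempty := ⟨ζ₀, right_mem_segment ℝ ζ₁ ζ₀, hζ₀.1⟩
  obtain ⟨p, hpS, hpmin⟩ := hScomp.exists_isMinOn hSne
    ((continuous_const.dist continuous_id).continuousOn :
      ContinuousOn (fun x => dist ζ₁ x) S)
  have hmin : ∀ x ∈ S, dist ζ₁ p ≤ dist ζ₁ x := fun x hx => hpmin hx
  have hpA : p ∈ A := hpS.2
  have hpseg : p ∈ segment ℝ ζ₁ ζ₀ := hpS.1
  have hpne : p ≠ ζ₁ := fun h => hζ₁.2 (h ▸ hpA)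
  have hdpos : 0 < dist ζ₁ p := dist_pos.mpr (Ne.symm hpne)
  -- p is in the ball
  have hball : Convex ℝ (Metric.ball c r) := convex_ball c r
  have hpball : p ∈ Metric.ball c r :=
    hball.segment_subset hζ₁.1 hζ₀.2 hpseg
  -- the half-open segment V from ζ₁ to p
  set V : Set ℂ := (AffineMap.lineMap ζ₁ p : ℝ →ᵃ[ℝ] ℂ) '' Set.Ico (0 : ℝ) 1 with hVdef
  have hline : Continuous (AffineMap.lineMap ζ₁ p : ℝ →ᵃ[ℝ] ℂ) :=
    (AffineMap.lineMap ζ₁ p : ℝ →ᵃ[ℝ] ℂ).continuous_of_finiteDimensional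
  have hsegsub : segment ℝ ζ₁ p ⊆ segment ℝ ζ₁ ζ₀ :=
    (convex_segment ζ₁ ζ₀).segment_subset (left_mem_segment ℝ ζ₁ ζ₀) hpseg
  have hVsub : V ⊆ Metric.ball c r \ A := by
    rintro x ⟨t, ht, rfl⟩
    have hxseg : (AffineMap.lineMap ζ₁ p : ℝ →ᵃ[ℝ] ℂ) t ∈ segment ℝ ζ₁ p := by
      rw [segment_eq_image_lineMap]
      exact ⟨t, ⟨ht.1, ht.2.le⟩, rfl⟩
    refine ⟨hball.segment_subset hζ₁.1 hpball hxseg, fun hxA => ?_⟩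
    have hxS : (AffineMap.lineMap ζ₁ p : ℝ →ᵃ[ℝ] ℂ) t ∈ S := ⟨hsegsub hxseg, hxA⟩
    have hd : dist ζ₁ ((AffineMap.lineMap ζ₁ p : ℝ →ᵃ[ℝ] ℂ) t) = t * dist ζ₁ p := by
      rw [dist_comm, dist_lineMap_left, Real.norm_eq_abs, abs_of_nonneg ht.1, dist_comm]
    have := hmin _ hxS
    rw [hd] at this
    nlinarith [ht.2, hdpos]
  have hζ₁V : ζ₁ ∈ V := ⟨0, ⟨le_refl 0, zero_lt_one⟩, by simp⟩
  have hVconn : IsPreconnected V :=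
    (isPreconnected_Ico).image _ hline.continuousOn
  have hVU : V ⊆ connectedComponentIn (Metric.ball c r \ A) ζ₁ :=
    hVconn.subset_connectedComponentIn hζ₁V hVsub
  have hopen : IsOpen (Metric.ball c r \ A) := Metric.isOpen_ball.sdiff hAclosed
  have hUopen : IsOpen (connectedComponentIn (Metric.ball c r \ A) ζ₁) :=
    hopen.connectedComponentIn
  have hpclV : p ∈ closure V := by
    have h1 : (1 : ℝ) ∈ closure (Set.Ico (0 : ℝ) 1) := by
      rw [closure_Ico (zero_ne_one)]
      exact ⟨zero_le_one, le_refl 1⟩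
    have : (AffineMap.lineMap ζ₁ p : ℝ →ᵃ[ℝ] ℂ) 1 ∈
        closure ((AffineMap.lineMap ζ₁ p : ℝ →ᵃ[ℝ] ℂ) '' Set.Ico (0 : ℝ) 1) :=
      (image_closure_subset_closure_image hline) ⟨1, h1, rfl⟩
    simpa using this
  refine ⟨p, hpS, hmin, ?_⟩
  rw [hUopen.frontier_eq]
  exact ⟨closure_mono hVU hpclV, fun hpU =>
    (connectedComponentIn_subset _ _ hpU).2 hpA⟩
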